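/- arXiv:2208.10763 — 2 statements merged into one kernel-verified Lean document; each statement's English description precedes it below -/
import Mathlib

section
/- Let 0 < θ ≤ 1/4, k > 0 and c ∈ ℝ, and set r = k / sin(2θ). Then the hyperbolic distance in the upper half-plane between the two points c − √(r² − k²) + k·i and c + √(r² − k²) + k·i is at least log(1/θ). (That is, an excursion of a geodesic into the depth-k horoball that reaches the depth k/sin(2θ) — equivalently, that enters with angle at most 2θ to the normal — has hyperbolic length at least ln(1/θ).) -/
open UpperHalfPlane

/-- For `0 < θ ≤ 1/4`, `k > 0` and `r = k / sin (2θ)`, the hyperbolic distance between the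
two endpoints `c ± √(r² - k²) + k i` of the excursion of the semicircle `C(c,r)` above the
line `{Im z = k}` is at least `log (1/θ)`. -/
theorem length_excursion_ge (θ k c : ℝ) (hθ₀ : 0 < θ) (hθ₁ : θ ≤ 1 / 4) (hk : 0 < k)
    (r : ℝ) (hr : r = k / Real.sin (2 * θ))
    (z₁ z₂ : UpperHalfPlane)
    (hz₁ : (z₁ : ℂ) = (c : ℂ) - (Real.sqrt (r ^ 2 - k ^ 2) : ℂ) + (k : ℂ) * Complex.I)
    (hz₂ : (z₂ : ℂ) = (c : ℂ) + (Real.sqrt (r ^ 2 - k ^ 2) : ℂ) + (k : ℂ) * Complex.I) :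
    Real.log (1 / θ) ≤ dist z₁ z₂ := by
  have hsin : 0 < Real.sin (2 * θ) := by
    apply Real.sin_pos_of_pos_of_lt_pi (by linarith)
    nlinarith [Real.pi_gt_three]
  have hsin2 : Real.sin (2 * θ) ≤ 2 * θ := by
    have := Real.sin_le (by positivity : (0:ℝ) ≤ 2 * θ)
    linarith
  have hsin1 : Real.sin (2 * θ) ≤ 1 := Real.sin_le_one _
  have hrk : k ≤ r := by
    rw [hr, le_div_iff₀ hsin]
    nlinarith
  have hA : 0 ≤ r ^ 2 - k ^ 2 := by nlinarith
  have him1 : z₁.im = k := by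
    have : (z₁ : ℂ).im = k := by rw [hz₁]; simp
    simpa [UpperHalfPlane.coe_im] using this
  have him2 : z₂.im = k := by
    have : (z₂ : ℂ).im = k := by rw [hz₂]; simp
    simpa [UpperHalfPlane.coe_im] using this
  have hdist : dist (z₁ : ℂ) (z₂ : ℂ) = 2 * Real.sqrt (r ^ 2 - k ^ 2) := by
    rw [Complex.dist_eq, hz₁, hz₂]
    have : ((c : ℂ) - (Real.sqrt (r ^ 2 - k ^ 2) : ℂ) + (k : ℂ) * Complex.I) -
        ((c : ℂ) + (Real.sqrt (r ^ 2 - k ^ 2) : ℂ) + (k : ℂ) * Complex.I)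
        = -(2 * (Real.sqrt (r ^ 2 - k ^ 2) : ℂ)) := by ring
    rw [this, norm_neg]
    rw [show (2 * (Real.sqrt (r ^ 2 - k ^ 2) : ℂ)) = ((2 * Real.sqrt (r ^ 2 - k ^ 2) : ℝ) : ℂ) by
      push_cast; ring]
    rw [Complex.norm_real, Real.norm_eq_abs, abs_of_nonneg (by positivity)]
  have hcosh : Real.cosh (dist z₁ z₂) = 2 * r ^ 2 / k ^ 2 - 1 := by
    rw [UpperHalfPlane.cosh_dist, hdist, him1, him2]
    rw [mul_pow, Real.sq_sqrt hA]
    field_simp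
    ring
  have hlog : 0 ≤ Real.log (1 / θ) := by
    apply Real.log_nonneg
    rw [le_div_iff₀ hθ₀]; linarith
  have hcoshlog : Real.cosh (Real.log (1 / θ)) = (1 / θ + θ) / 2 := by
    rw [Real.cosh_eq, Real.exp_log (by positivity), ← Real.log_inv,
      Real.exp_log (by simpa using hθ₀)]
    simp
  have hs2 : Real.sin (2 * θ) ^ 2 ≤ 4 * θ ^ 2 := by nlinarith
  have key : Real.cosh (Real.log (1 / θ)) ≤ Real.cosh (dist z₁ z₂) := by
    rw [hcoshlog, hcosh, hr]
    rw [div_pow]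
    have heq : 2 * (k ^ 2 / Real.sin (2 * θ) ^ 2) / k ^ 2 = 2 / Real.sin (2 * θ) ^ 2 := by
      field_simp
    rw [heq]
    have h1 : 1 / (2 * θ ^ 2) ≤ 2 / Real.sin (2 * θ) ^ 2 := by
      rw [div_le_div_iff₀ (by positivity) (by positivity)]
      nlinarith
    have h2 : (1 / θ + θ) / 2 + 1 ≤ 1 / (2 * θ ^ 2) := by
      have h3 : (1 / θ + θ) / 2 + 1 = (θ + θ ^ 3 + 2 * θ ^ 2) / (2 * θ ^ 2) := by
        field_simp
      rw [h3, div_le_div_iff₀ (by positivity) (by positivity)]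
      nlinarith [sq_nonneg θ, mul_pos hθ₀ hθ₀, mul_pos (mul_pos hθ₀ hθ₀) hθ₀,
        mul_le_mul_of_nonneg_left hθ₁ (le_of_lt hθ₀),
        mul_le_mul_of_nonneg_left (mul_le_mul_of_nonneg_left hθ₁ (le_of_lt hθ₀)) (le_of_lt hθ₀)]
    linarith
  have := Real.cosh_le_cosh.mp key
  rwa [abs_of_nonneg hlog, abs_of_nonneg dist_nonneg] at this
end

section
/- Let k > 0 be real, r ≥ k, c ∈ ℝ, and set ℓ = 2·arcosh(r/k) (the hyperbolic length of the excursion of the semicircle C(c,r) above the line {Im z = k}, so that r = k·cosh(ℓ/2)). Then the number N of nonzero integers n such that C(c,r) ∩ C(c+n,r) ≠ ∅ satisfies k·e^{ℓ/2} − 2 ≤ N ≤ 4k·e^{ℓ/2}. -/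
/-- The Euclidean semicircle of center `c ∈ ℝ` and radius `r` in the upper half-plane. -/
def semicircle (c r : ℝ) : Set ℂ :=
  {z : ℂ | 0 < z.im ∧ ‖z - (c : ℂ)‖ = r}

/-- The inverse hyperbolic cosine on `[1, ∞)`. -/
noncomputable def arcosh (x : ℝ) : ℝ := Real.log (x + Real.sqrt (x ^ 2 - 1))

lemma abs_eq_iff_normSq (w : ℂ) (r : ℝ) (hr : 0 ≤ r) :
    ‖w‖ = r ↔ Complex.normSq w = r ^ 2 := by
  constructor
  · intro h; rw [← Complex.sq_norm, h]
  · intro h; rw [Complex.norm_def, h, Real.sqrt_sq hr]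

lemma semicircle_inter (c r : ℝ) (hr : 0 < r) (n : ℤ) (hn : n ≠ 0) :
    (semicircle c r ∩ semicircle (c + n) r).Nonempty ↔ |(n : ℝ)| < 2 * r := by
  have hn' : ((n : ℝ)) ≠ 0 := Int.cast_ne_zero.mpr hn
  constructor
  · rintro ⟨z, ⟨hz1, hz2⟩, ⟨_, hz4⟩⟩
    rw [abs_eq_iff_normSq _ _ hr.le] at hz2 hz4
    have h2 : (z.re - c) ^ 2 + z.im ^ 2 = r ^ 2 := by
      have := hz2
      simp only [Complex.normSq_apply, Complex.sub_re, Complex.sub_im,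
        Complex.ofReal_re, Complex.ofReal_im, sub_zero] at this
      nlinarith [this]
    have h4 : (z.re - (c + n)) ^ 2 + z.im ^ 2 = r ^ 2 := by
      have := hz4
      simp only [Complex.normSq_apply, Complex.sub_re, Complex.sub_im,
        Complex.add_re, Complex.add_im, Complex.ofReal_re, Complex.ofReal_im,
        Complex.intCast_re, Complex.intCast_im, sub_zero, add_zero] at this
      nlinarith [this]
    have key : (n : ℝ) * (2 * (z.re - c) - n) = 0 := by linear_combination h2 - h4
    have ha : z.re - c = n / 2 := by
      rcases mul_eq_zero.mp key with h | h
      · exact absurd h hn'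
      · linarith
    rw [abs_lt]
    constructor <;> nlinarith [h2, ha, hz1, sq_nonneg z.im]
  · intro h
    have hpos : 0 < r ^ 2 - (n : ℝ) ^ 2 / 4 := by
      have : (n : ℝ) ^ 2 < (2 * r) ^ 2 := by
        have := abs_lt.mp h
        nlinarith [this.1, this.2]
      nlinarith
    set y : ℝ := Real.sqrt (r ^ 2 - (n : ℝ) ^ 2 / 4) with hy
    have hy2 : y ^ 2 = r ^ 2 - (n : ℝ) ^ 2 / 4 := Real.sq_sqrt hpos.le
    have hypos : 0 < y := Real.sqrt_pos.mpr hpos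
    refine ⟨(↑(c + (n : ℝ) / 2) + y * Complex.I : ℂ), ⟨?_, ?_⟩, ⟨?_, ?_⟩⟩
    · simp [hypos]
    · rw [abs_eq_iff_normSq _ _ hr.le]
      simp only [Complex.normSq_apply, Complex.sub_re, Complex.sub_im,
        Complex.add_re, Complex.add_im, Complex.mul_re, Complex.mul_im,
        Complex.I_re, Complex.I_im, Complex.ofReal_re, Complex.ofReal_im]
      ring_nf
      nlinarith [hy2]
    · simp [hypos]
    · rw [abs_eq_iff_normSq _ _ hr.le]
      simp only [Complex.normSq_apply, Complex.sub_re, Complex.sub_im,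
        Complex.add_re, Complex.add_im, Complex.mul_re, Complex.mul_im,
        Complex.I_re, Complex.I_im, Complex.ofReal_re, Complex.ofReal_im,
        Complex.intCast_re, Complex.intCast_im]
      ring_nf
      nlinarith [hy2]

/-- An excursion into the depth-`k` horoball of hyperbolic length `ℓ = 2 arcosh (r/k)`
(i.e. along a semicircle of radius `r = k cosh (ℓ/2)`) has between `k e^{ℓ/2} - 2` and
`4 k e^{ℓ/2}` self-intersections in the cyclic cover: the number `N` of nonzero integers
`n` with `C(c,r) ∩ C(c+n,r) ≠ ∅` satisfies `k e^{ℓ/2} - 2 ≤ N ≤ 4 k e^{ℓ/2}`. -/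
theorem excursion_self_intersections_bounds (k r c : ℝ) (hk : 0 < k) (hkr : k ≤ r)
    (ℓ : ℝ) (hℓ : ℓ = 2 * arcosh (r / k))
    (N : ℕ) (hN : N = {n : ℤ | n ≠ 0 ∧ (semicircle c r ∩ semicircle (c + n) r).Nonempty}.ncard) :
    k * Real.exp (ℓ / 2) - 2 ≤ (N : ℝ) ∧ (N : ℝ) ≤ 4 * k * Real.exp (ℓ / 2) := by
  have hr : 0 < r := lt_of_lt_of_le hk hkr
  -- Step 1: compute k * exp (ℓ / 2) = r + sqrt (r ^ 2 - k ^ 2)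
  have hsub : (0 : ℝ) ≤ r ^ 2 - k ^ 2 := by nlinarith
  have hexp : k * Real.exp (ℓ / 2) = r + Real.sqrt (r ^ 2 - k ^ 2) := by
    have hx1 : (1 : ℝ) ≤ r / k := (one_le_div hk).mpr hkr
    have harg : 0 < r / k + Real.sqrt ((r / k) ^ 2 - 1) := by
      have : (0:ℝ) < r / k := lt_of_lt_of_le one_pos hx1
      positivity
    have h1 : Real.exp (ℓ / 2) = r / k + Real.sqrt ((r / k) ^ 2 - 1) := by
      rw [hℓ]
      rw [show (2 * arcosh (r / k)) / 2 = arcosh (r / k) by ring]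
      rw [arcosh, Real.exp_log harg]
    have h2 : Real.sqrt ((r / k) ^ 2 - 1) = Real.sqrt (r ^ 2 - k ^ 2) / k := by
      rw [show (r / k) ^ 2 - 1 = (r ^ 2 - k ^ 2) / k ^ 2 by field_simp]
      rw [Real.sqrt_div hsub, Real.sqrt_sq hk.le]
    rw [h1, h2]
    field_simp
  have hsqrt_le : Real.sqrt (r ^ 2 - k ^ 2) ≤ r := by
    calc Real.sqrt (r ^ 2 - k ^ 2) ≤ Real.sqrt (r ^ 2) := by
          apply Real.sqrt_le_sqrt; nlinarith
      _ = r := Real.sqrt_sq hr.le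
  have hke_le : k * Real.exp (ℓ / 2) ≤ 2 * r := by rw [hexp]; linarith
  have hke_ge : r ≤ k * Real.exp (ℓ / 2) := by
    rw [hexp]; nlinarith [Real.sqrt_nonneg (r ^ 2 - k ^ 2)]
  -- Step 2: compute N
  set M : ℤ := ⌈2 * r⌉ - 1 with hM
  have hMpos : 0 ≤ M := by
    have : 0 < ⌈2 * r⌉ := Int.ceil_pos.mpr (by linarith)
    omega
  have hset : {n : ℤ | n ≠ 0 ∧ (semicircle c r ∩ semicircle (c + n) r).Nonempty}
      = ↑((Finset.Icc (-M) M).erase 0) := by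
    ext n
    simp only [Set.mem_setOf_eq, Finset.coe_erase, Set.mem_diff, Finset.mem_coe,
      Finset.mem_Icc, Set.mem_singleton_iff]
    constructor
    · rintro ⟨hn, hne⟩
      have habs := (semicircle_inter c r hr n hn).mp hne
      rw [abs_lt] at habs
      refine ⟨⟨?_, ?_⟩, hn⟩
      · have : (-n : ℝ) < 2 * r := by linarith [habs.1]
        have := Int.lt_ceil.mpr (by exact_mod_cast this)
        omega
      · have := Int.lt_ceil.mpr habs.2
        omega
    · rintro ⟨⟨h1, h2⟩, hn⟩
      refine ⟨hn, (semicircle_inter c r hr n hn).mpr ?_⟩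
      rw [abs_lt]
      have c1 : (n : ℝ) < 2 * r := by
        have : n < ⌈2 * r⌉ := by omega
        exact Int.lt_ceil.mp this
      have c2 : (-n : ℤ) < ⌈2 * r⌉ := by omega
      have c2x : ((-n : ℤ) : ℝ) < 2 * r := Int.lt_ceil.mp c2
      push_cast at c2x
      constructor <;> linarith
  have hNcard : (N : ℤ) = 2 * M := by
    rw [hN, hset, Set.ncard_coe_finset]
    rw [Finset.card_erase_of_mem (by simp [Finset.mem_Icc]; omega)]
    rw [Int.card_Icc]
    omega
  have hNreal : (N : ℝ) = 2 * (M : ℝ) := by exact_mod_cast hNcard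
  -- Step 3: bounds on M:  2r - 1 ≤ M < 2r
  have hM1 : 2 * r - 1 ≤ (M : ℝ) := by
    have := Int.le_ceil (2 * r)
    push_cast [hM]
    linarith
  have hM2 : (M : ℝ) < 2 * r := by
    have := Int.ceil_lt_add_one (2 * r)
    push_cast [hM]
    linarith
  constructor
  ·
    rw [hNreal]; linarith
  · rw [hNreal]; linarith
end
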